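/- Let A = ℂ[x₁,…,x_q]/(x_i x_j, x_i² − x_j², x_i³ : i ≠ j). Then A is a finite-dimensional algebra of dimension q+2 with basis {1, x₁, …, x_q, [x₁²]}, where the classes [x_i²] all coincide, and its structure tensor, in the basis e₀ = 1*, e_i = x_i*, e_{q+1} = [x₁²]* of the first two factors and e₀ = [x₁²], e_i = x_i, e_{q+1} = 1 of the third factor, equals the big Coppersmith–Winograd tensor T_{CW,q} = e₀⊗e₀⊗e_{q+1} + Σ_{i=1}^q (e₀⊗e_i⊗e_i + e_i⊗e₀⊗e_i + e_i⊗e_i⊗e₀) + e₀⊗e_{q+1}⊗e₀ + e_{q+1}⊗e₀⊗e₀. -/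

import Mathlib

open MvPolynomial

/-- The big Coppersmith–Winograd tensor `T_{CW,q}` in coordinates on
`ℂ^{q+2}`: `e₀⊗e₀⊗e_{q+1} + Σᵢ (e₀⊗eᵢ⊗eᵢ + eᵢ⊗e₀⊗eᵢ + eᵢ⊗eᵢ⊗e₀)
+ e₀⊗e_{q+1}⊗e₀ + e_{q+1}⊗e₀⊗e₀`, where `i` ranges over the "middle"
indices `1,…,q`. -/
noncomputable def cwTensor (q : ℕ) : Fin (q + 2) → Fin (q + 2) → Fin (q + 2) → ℂ :=
  fun I J K =>
    (if I = 0 ∧ J = 0 ∧ K = Fin.last (q + 1) then (1 : ℂ) else 0) +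
    (if I = 0 ∧ (J ≠ 0 ∧ J ≠ Fin.last (q + 1)) ∧ K = J then 1 else 0) +
    (if (I ≠ 0 ∧ I ≠ Fin.last (q + 1)) ∧ J = 0 ∧ K = I then 1 else 0) +
    (if (I ≠ 0 ∧ I ≠ Fin.last (q + 1)) ∧ J = I ∧ K = 0 then 1 else 0) +
    (if I = 0 ∧ J = Fin.last (q + 1) ∧ K = 0 then 1 else 0) +
    (if I = Fin.last (q + 1) ∧ J = 0 ∧ K = 0 then 1 else 0)

/-- The ideal `(xᵢxⱼ, xᵢ² − xⱼ², xᵢ³ : i ≠ j)` in `ℂ[x₁,…,x_q]`. -/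
noncomputable def cwIdeal (q : ℕ) : Ideal (MvPolynomial (Fin q) ℂ) :=
  Ideal.span ({f | ∃ i j : Fin q, i ≠ j ∧ f = X i * X j} ∪
    {f | ∃ i j : Fin q, i ≠ j ∧ f = X i ^ 2 - X j ^ 2} ∪
    {f | ∃ i : Fin q, f = X i ^ 3})

set_option maxHeartbeats 1000000

namespace CW
noncomputable section
variable (q : ℕ)

def mid (i : Fin q) : Fin (q + 2) := i.succ.castSucc

lemma mid_ne_zero (i : Fin q) : mid q i ≠ 0 := by
  simp [mid, Fin.ext_iff]

lemma mid_ne_last (i : Fin q) : mid q i ≠ Fin.last (q + 1) := by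
  have := i.isLt
  simp [mid, Fin.ext_iff]; omega

lemma zero_ne_last : (0 : Fin (q + 2)) ≠ Fin.last (q + 1) := by
  simp [Fin.ext_iff]

lemma cases3 (k : Fin (q + 2)) :
    k = 0 ∨ (∃ i : Fin q, k = mid q i) ∨ k = Fin.last (q + 1) := by
  induction k using Fin.cases with
  | zero => left; rfl
  | succ j =>
    induction j using Fin.lastCases with
    | last => right; right; exact (Fin.succ_last _).symm ▸ rfl
    | cast i => right; left; exact ⟨i, by rw [mid, Fin.succ_castSucc]⟩

def Model := Fin (q + 2) → ℂ

instance : AddCommGroup (Model q) := inferInstanceAs (AddCommGroup (Fin (q + 2) → ℂ))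

def mulM (x y : Model q) : Model q := fun k =>
  if k = 0 then x 0 * y 0
  else if k = Fin.last (q + 1) then
    x 0 * y (Fin.last (q + 1)) + x (Fin.last (q + 1)) * y 0 +
      ∑ i : Fin q, x (mid q i) * y (mid q i)
  else x 0 * y k + x k * y 0

def oneM : Model q := fun k => if k = 0 then 1 else 0

variable {q}

lemma mulM_zero (x y : Model q) : mulM q x y 0 = x 0 * y 0 := by simp [mulM]

lemma mulM_last (x y : Model q) :
    mulM q x y (Fin.last (q + 1)) =
      x 0 * y (Fin.last (q + 1)) + x (Fin.last (q + 1)) * y 0 +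
        ∑ i : Fin q, x (mid q i) * y (mid q i) := by
  simp [mulM, (zero_ne_last q).symm]

lemma mulM_mid (x y : Model q) (i : Fin q) :
    mulM q x y (mid q i) = x 0 * y (mid q i) + x (mid q i) * y 0 := by
  simp [mulM, mid_ne_zero q i, mid_ne_last q i]

lemma oneM_zero : oneM q 0 = 1 := rfl
lemma oneM_last : oneM q (Fin.last (q + 1)) = 0 := by
  simp [oneM, (zero_ne_last q).symm]
lemma oneM_mid (i : Fin q) : oneM q (mid q i) = 0 := by
  simp [oneM, mid_ne_zero q i]

lemma add_apply (x y : Model q) (m : Fin (q + 2)) : (x + y) m = x m + y m := rfl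
lemma zero_apply (m : Fin (q + 2)) : (0 : Model q) m = 0 := rfl
instance : CommRing (Model q) :=
  { (inferInstanceAs (AddCommGroup (Model q)) : AddCommGroup (Model q)) with
    mul := mulM q
    one := oneM q
    mul_assoc := fun x y z => by
      funext k
      show mulM q (mulM q x y) z k = mulM q x (mulM q y z) k
      rcases cases3 q k with rfl | ⟨i, rfl⟩ | rfl
      · simp [mulM_zero]; ring
      · simp [mulM_mid, mulM_zero]; ring
      · simp only [mulM_last, mulM_zero, mulM_mid, Finset.sum_add_distrib,
          Finset.mul_sum, Finset.sum_mul, mul_add, add_mul]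
        simp only [mul_comm, mul_left_comm, mul_assoc]
        ring
    one_mul := fun x => by
      funext k
      show mulM q (oneM q) x k = x k
      rcases cases3 q k with rfl | ⟨i, rfl⟩ | rfl
      · simp [mulM_zero, oneM_zero]
      · simp [mulM_mid, oneM_zero, oneM_mid]
      · simp [mulM_last, oneM_zero, oneM_last, oneM_mid]
    mul_one := fun x => by
      funext k
      show mulM q x (oneM q) k = x k
      rcases cases3 q k with rfl | ⟨i, rfl⟩ | rfl
      · simp [mulM_zero, oneM_zero]
      · simp [mulM_mid, oneM_zero, oneM_mid]
      · simp [mulM_last, oneM_zero, oneM_last, oneM_mid]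
    left_distrib := fun x y z => by
      funext k
      show mulM q x (y + z) k = (mulM q x y + mulM q x z) k
      rcases cases3 q k with rfl | ⟨i, rfl⟩ | rfl
      · simp [mulM_zero, add_apply]; ring
      · simp [mulM_mid, add_apply]; ring
      · simp [mulM_last, add_apply, Finset.sum_add_distrib, mul_add]; ring
    right_distrib := fun x y z => by
      funext k
      show mulM q (x + y) z k = (mulM q x z + mulM q y z) k
      rcases cases3 q k with rfl | ⟨i, rfl⟩ | rfl
      · simp [mulM_zero, add_apply]; ring
      · simp [mulM_mid, add_apply]; ring
      · simp [mulM_last, add_apply, Finset.sum_add_distrib, add_mul]; ring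
    zero_mul := fun x => by
      funext k
      show mulM q 0 x k = (0 : Model q) k
      rcases cases3 q k with rfl | ⟨i, rfl⟩ | rfl
      · simp [mulM_zero, zero_apply]
      · simp [mulM_mid, zero_apply]
      · simp [mulM_last, zero_apply]
    mul_zero := fun x => by
      funext k
      show mulM q x 0 k = (0 : Model q) k
      rcases cases3 q k with rfl | ⟨i, rfl⟩ | rfl
      · simp [mulM_zero, zero_apply]
      · simp [mulM_mid, zero_apply]
      · simp [mulM_last, zero_apply]
    mul_comm := fun x y => by
      funext k
      show mulM q x y k = mulM q y x k
      rcases cases3 q k with rfl | ⟨i, rfl⟩ | rfl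
      · simp [mulM_zero]; ring
      · simp [mulM_mid]; ring
      · simp only [mulM_last]
        simp only [mul_comm, mul_left_comm, mul_assoc]
        ring }

lemma mul_def (x y : Model q) : x * y = mulM q x y := rfl
lemma one_def : (1 : Model q) = oneM q := rfl

variable (q)

def algM : ℂ →+* Model q where
  toFun c := fun k => if k = 0 then c else 0
  map_one' := rfl
  map_mul' c d := by
    funext k
    show (if k = 0 then c * d else 0) =
      mulM q (fun k => if k = 0 then c else 0) (fun k => if k = 0 then d else 0) k
    rcases cases3 q k with rfl | ⟨i, rfl⟩ | rfl
    · erw [mulM_zero]; simp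
    · erw [mulM_mid]; simp [mid_ne_zero q i]
    · erw [mulM_last]; simp [(zero_ne_last q).symm, mid_ne_zero]
  map_zero' := by
    funext k
    show (if k = 0 then (0:ℂ) else 0) = 0
    simp
  map_add' c d := by
    funext k
    show (if k = 0 then c + d else 0) = (if k = 0 then c else 0) + (if k = 0 then d else 0)
    by_cases hk : k = 0 <;> simp [hk]

instance : Algebra ℂ (Model q) :=
  { algebraMap := algM q
    smul := fun c x => fun k => c * x k
    commutes' := fun c x => mul_comm _ _
    smul_def' := fun c x => by
      funext k
      show c * x k = mulM q (fun k => if k = 0 then c else 0) x k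
      rcases cases3 q k with rfl | ⟨i, rfl⟩ | rfl
      · erw [mulM_zero]; simp
      · erw [mulM_mid]; simp [mid_ne_zero q i]
      · erw [mulM_last]; simp [(zero_ne_last q).symm, mid_ne_zero] }

variable {q}

lemma smul_apply' (c : ℂ) (x : Model q) (m : Fin (q + 2)) : (c • x) m = c * x m := rfl
lemma algebraMap_apply' (c : ℂ) (k : Fin (q + 2)) :
    algebraMap ℂ (Model q) c k = if k = 0 then c else 0 := rfl


-- ### the standard "basis" vectors of the model
variable (q)
def eF (k : Fin (q + 2)) : Model q := fun m => if m = k then 1 else 0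
variable {q}

lemma mid_eq_mid {i j : Fin q} : mid q i = mid q j ↔ i = j := by
  constructor
  · intro h; simpa [mid, Fin.ext_iff] using h
  · rintro rfl; rfl

lemma eF_apply (k m : Fin (q + 2)) : eF q k m = if m = k then 1 else 0 := rfl

lemma eF_mid_mul_mid_self (i : Fin q) :
    eF q (mid q i) * eF q (mid q i) = eF q (Fin.last (q + 1)) := by
  funext m
  rw [mul_def]
  rcases cases3 q m with rfl | ⟨l, rfl⟩ | rfl
  · rw [mulM_zero]
    simp [eF_apply, (mid_ne_zero q i).symm, zero_ne_last q]
  · rw [mulM_mid]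
    simp [eF_apply, (mid_ne_zero q i).symm, mid_ne_last q l]
  · rw [mulM_last]
    have hbody : ∀ l : Fin q,
        eF q (mid q i) (mid q l) * eF q (mid q i) (mid q l) = if l = i then (1:ℂ) else 0 := by
      intro l
      rw [eF_apply]; simp only [mid_eq_mid]
      split_ifs <;> simp
    rw [Finset.sum_congr rfl fun l _ => hbody l]
    simp [eF_apply, (mid_ne_zero q i).symm, (mid_ne_last q i).symm, Finset.sum_ite_eq,
      Finset.sum_ite_eq']

lemma eF_mid_mul_mid_ne {i j : Fin q} (h : i ≠ j) :
    eF q (mid q i) * eF q (mid q j) = 0 := by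
  funext m
  rw [mul_def]
  rcases cases3 q m with rfl | ⟨l, rfl⟩ | rfl
  · rw [mulM_zero]
    simp [eF_apply, (mid_ne_zero q i).symm, zero_apply]
  · rw [mulM_mid]
    simp [eF_apply, (mid_ne_zero q i).symm, (mid_ne_zero q j).symm, zero_apply]
  · rw [mulM_last]
    have hbody : ∀ l : Fin q,
        eF q (mid q i) (mid q l) * eF q (mid q j) (mid q l) = 0 := by
      intro l
      rw [eF_apply, eF_apply]; simp only [mid_eq_mid]
      split_ifs with h1 h2
      · exact absurd (h1 ▸ h2) h
      all_goals simp
    rw [Finset.sum_congr rfl fun l _ => hbody l]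
    simp [eF_apply, (mid_ne_zero q i).symm, (mid_ne_zero q j).symm,
      (mid_ne_last q i).symm, (mid_ne_last q j).symm, zero_apply]

lemma eF_last_mul_mid (i : Fin q) :
    eF q (Fin.last (q + 1)) * eF q (mid q i) = 0 := by
  funext m
  rw [mul_def]
  rcases cases3 q m with rfl | ⟨l, rfl⟩ | rfl
  · rw [mulM_zero]
    simp [eF_apply, zero_ne_last q, zero_apply]
  · rw [mulM_mid]
    simp [eF_apply, zero_ne_last q, (mid_ne_zero q i).symm, mid_ne_last q l, zero_apply]
  · rw [mulM_last]
    simp [eF_apply, zero_ne_last q, (mid_ne_zero q i).symm, mid_ne_last, zero_apply]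


-- ### the evaluation homomorphism
variable (q)

def phi : MvPolynomial (Fin q) ℂ →ₐ[ℂ] Model q := aeval (fun i => eF q (mid q i))

variable {q}

lemma phi_X (i : Fin q) : phi q (X i) = eF q (mid q i) := aeval_X _ _

lemma phi_sq (i : Fin q) : phi q (X i ^ 2) = eF q (Fin.last (q + 1)) := by
  rw [map_pow, phi_X, pow_two, eF_mid_mul_mid_self]

lemma mem1 {i j : Fin q} (h : i ≠ j) : X i * X j ∈ cwIdeal q := by
  apply Ideal.subset_span
  simp only [Set.mem_union, Set.mem_setOf_eq]
  exact Or.inl (Or.inl ⟨i, j, h, rfl⟩)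

lemma mem2 {i j : Fin q} (h : i ≠ j) : X i ^ 2 - X j ^ 2 ∈ cwIdeal q := by
  apply Ideal.subset_span
  simp only [Set.mem_union, Set.mem_setOf_eq]
  exact Or.inl (Or.inr ⟨i, j, h, rfl⟩)

lemma mem3 (i : Fin q) : X i ^ 3 ∈ cwIdeal q := by
  apply Ideal.subset_span
  simp only [Set.mem_union, Set.mem_setOf_eq]
  exact Or.inr ⟨i, rfl⟩

lemma phi_ideal : ∀ a ∈ cwIdeal q, phi q a = 0 := by
  have hle : cwIdeal q ≤ RingHom.ker (phi q) := by
    rw [cwIdeal, Ideal.span_le]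
    rintro f hf
    simp only [Set.mem_union, Set.mem_setOf_eq] at hf
    simp only [SetLike.mem_coe, RingHom.mem_ker]
    rcases hf with (⟨i, j, hij, rfl⟩ | ⟨i, j, hij, rfl⟩) | ⟨i, rfl⟩
    · rw [map_mul, phi_X, phi_X]; exact eF_mid_mul_mid_ne hij
    · rw [map_sub, phi_sq, phi_sq, sub_self]
    · rw [show (X i ^ 3 : MvPolynomial (Fin q) ℂ) = X i ^ 2 * X i by ring,
        map_mul, phi_sq, phi_X]
      exact eF_last_mul_mid i
  exact fun a ha => hle ha

variable (q)

def psi : (MvPolynomial (Fin q) ℂ ⧸ cwIdeal q) →ₐ[ℂ] Model q :=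
  Ideal.Quotient.liftₐ (cwIdeal q) (phi q) phi_ideal

variable {q}

lemma psi_mk (p : MvPolynomial (Fin q) ℂ) :
    psi q (Ideal.Quotient.mk (cwIdeal q) p) = phi q p := by
  simp [psi, Ideal.Quotient.liftₐ_apply, Ideal.Quotient.lift_mk]
  rfl

-- ### quotient arithmetic
lemma q_mul_ne {i j : Fin q} (h : i ≠ j) :
    Ideal.Quotient.mk (cwIdeal q) (X i) * Ideal.Quotient.mk (cwIdeal q) (X j) = 0 := by
  rw [← map_mul]; exact Ideal.Quotient.eq_zero_iff_mem.mpr (mem1 h)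

lemma q_sq (i j : Fin q) :
    Ideal.Quotient.mk (cwIdeal q) (X i ^ 2) = Ideal.Quotient.mk (cwIdeal q) (X j ^ 2) := by
  rcases eq_or_ne i j with rfl | h
  · rfl
  · exact (Ideal.Quotient.mk_eq_mk_iff_sub_mem _ _).mpr (mem2 h)

lemma q_x_mul_x (i : Fin q) :
    Ideal.Quotient.mk (cwIdeal q) (X i) * Ideal.Quotient.mk (cwIdeal q) (X i) =
      Ideal.Quotient.mk (cwIdeal q) (X i ^ 2) := by
  rw [← map_mul, ← pow_two]

lemma q_x_mul_sq (i j : Fin q) :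
    Ideal.Quotient.mk (cwIdeal q) (X i) * Ideal.Quotient.mk (cwIdeal q) (X j ^ 2) = 0 := by
  rw [q_sq j i, ← map_mul, show (X i * X i ^ 2 : MvPolynomial (Fin q) ℂ) = X i ^ 3 by ring]
  exact Ideal.Quotient.eq_zero_iff_mem.mpr (mem3 i)

lemma q_sq_mul_sq (i j : Fin q) :
    Ideal.Quotient.mk (cwIdeal q) (X i ^ 2) * Ideal.Quotient.mk (cwIdeal q) (X j ^ 2) = 0 := by
  rw [show (X i ^ 2 : MvPolynomial (Fin q) ℂ) = X i * X i from pow_two _, map_mul,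
    mul_assoc, q_x_mul_sq, mul_zero]

-- ### the candidate basis
def vB (q : ℕ) (hq : 0 < q) : Fin (q + 2) → MvPolynomial (Fin q) ℂ ⧸ cwIdeal q := fun k =>
  Fin.cases 1
    (fun j => Fin.lastCases (Ideal.Quotient.mk (cwIdeal q) (X (⟨0, hq⟩ : Fin q) ^ 2))
      (fun i => Ideal.Quotient.mk (cwIdeal q) (X i)) j) k

variable (hq : 0 < q)

lemma vB_zero : vB q hq 0 = 1 := by simp [vB]

lemma vB_mid (i : Fin q) : vB q hq (mid q i) = Ideal.Quotient.mk (cwIdeal q) (X i) := by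
  rw [show mid q i = (i.castSucc).succ from (Fin.succ_castSucc i).symm]
  rw [vB, Fin.cases_succ, Fin.lastCases_castSucc]

lemma vB_last :
    vB q hq (Fin.last (q + 1)) = Ideal.Quotient.mk (cwIdeal q) (X (⟨0, hq⟩ : Fin q) ^ 2) := by
  rw [show Fin.last (q + 1) = (Fin.last q).succ from (Fin.succ_last q).symm]
  rw [vB, Fin.cases_succ, Fin.lastCases_last]

lemma psi_vB : ∀ k, psi q (vB q hq k) = eF q k := by
  intro k
  rcases cases3 q k with rfl | ⟨i, rfl⟩ | rfl
  · rw [vB_zero, map_one]; rfl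
  · rw [vB_mid, psi_mk, phi_X]
  · rw [vB_last, psi_mk, phi_sq]

-- evaluation at a point as an additive monoid hom
def evm (m : Fin (q + 2)) : Model q →+ ℂ where
  toFun x := x m
  map_zero' := rfl
  map_add' _ _ := rfl

lemma li_eF : LinearIndependent ℂ (eF q) := by
  rw [Fintype.linearIndependent_iff]
  intro c hc k
  have h := congrArg (evm k) hc
  rw [map_sum, map_zero] at h
  have : ∀ i, evm k (c i • eF q i) = if k = i then c i else 0 := by
    intro i
    show (c i • eF q i) k = _
    rw [smul_apply', eF_apply]
    split_ifs <;> simp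
  rw [Finset.sum_congr rfl fun i _ => this i] at h
  simpa [Finset.sum_ite_eq] using h

lemma li_vB : LinearIndependent ℂ (vB q hq) := by
  apply LinearIndependent.of_comp (psi q).toLinearMap
  have : ((psi q).toLinearMap ∘ vB q hq) = eF q := funext (psi_vB hq)
  rw [this]
  exact li_eF

-- ### spanning
lemma span_vB : ⊤ ≤ Submodule.span ℂ (Set.range (vB q hq)) := by
  set P := Submodule.span ℂ (Set.range (vB q hq)) with hP
  have hmem : ∀ k, vB q hq k ∈ P := fun k => Submodule.subset_span ⟨k, rfl⟩
  have h1 : (1 : MvPolynomial (Fin q) ℂ ⧸ cwIdeal q) ∈ P := vB_zero hq ▸ hmem 0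
  have key : ∀ a ∈ P, ∀ i : Fin q, a * Ideal.Quotient.mk (cwIdeal q) (X i) ∈ P := by
    intro a ha i
    induction ha using Submodule.span_induction with
    | mem x hx =>
      obtain ⟨k, rfl⟩ := hx
      rcases cases3 q k with rfl | ⟨l, rfl⟩ | rfl
      · rw [vB_zero, one_mul, ← vB_mid hq]; exact hmem _
      · rw [vB_mid]
        rcases eq_or_ne l i with rfl | h
        · rw [q_x_mul_x, q_sq l ⟨0, hq⟩, ← vB_last hq]; exact hmem _
        · rw [q_mul_ne h]; exact P.zero_mem
      · rw [vB_last, mul_comm, q_x_mul_sq]; exact P.zero_mem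
    | zero => rw [zero_mul]; exact P.zero_mem
    | add x y _ _ hx hy => rw [add_mul]; exact P.add_mem hx hy
    | smul c x _ hx => rw [smul_mul_assoc]; exact P.smul_mem c hx
  intro a ha
  clear ha
  obtain ⟨p, rfl⟩ := Ideal.Quotient.mk_surjective a
  induction p using MvPolynomial.induction_on with
  | C c =>
    have hc : Ideal.Quotient.mk (cwIdeal q) (C c) = c • 1 := by
      rw [← Ideal.Quotient.mkₐ_eq_mk ℂ,
        show (C c : MvPolynomial (Fin q) ℂ) = c • 1 by rw [smul_eq_C_mul, mul_one],
        map_smul, map_one]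
    rw [hc]; exact P.smul_mem c h1
  | add p r hp hr => rw [map_add]; exact P.add_mem hp hr
  | mul_X p i hp => rw [map_mul]; exact key _ hp i


-- ### reduction lemmas for `cwTensor`
lemma cw1 (K : Fin (q + 2)) :
    cwTensor q 0 0 K = if K = Fin.last (q + 1) then 1 else 0 := by
  simp [cwTensor, zero_ne_last q]

lemma cw2 (j : Fin q) (K : Fin (q + 2)) :
    cwTensor q 0 (mid q j) K = if K = mid q j then 1 else 0 := by
  simp [cwTensor, zero_ne_last q, mid_ne_zero q j, mid_ne_last q j]

lemma cw3 (K : Fin (q + 2)) :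
    cwTensor q 0 (Fin.last (q + 1)) K = if K = 0 then 1 else 0 := by
  simp [cwTensor, zero_ne_last q, (zero_ne_last q).symm]

lemma cw4 (i : Fin q) (K : Fin (q + 2)) :
    cwTensor q (mid q i) 0 K = if K = mid q i then 1 else 0 := by
  simp [cwTensor, zero_ne_last q, mid_ne_zero q i, mid_ne_last q i, (mid_ne_zero q i).symm]

lemma cw5 (i j : Fin q) (K : Fin (q + 2)) :
    cwTensor q (mid q i) (mid q j) K = if j = i ∧ K = 0 then 1 else 0 := by
  simp [cwTensor, mid_ne_zero, mid_ne_last, mid_eq_mid]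

lemma cw6 (i : Fin q) (K : Fin (q + 2)) :
    cwTensor q (mid q i) (Fin.last (q + 1)) K = 0 := by
  simp [cwTensor, mid_ne_zero q i, mid_ne_last q i, (zero_ne_last q).symm,
    (mid_ne_last q i).symm]

lemma cw7 (K : Fin (q + 2)) :
    cwTensor q (Fin.last (q + 1)) 0 K = if K = 0 then 1 else 0 := by
  simp [cwTensor, (zero_ne_last q).symm]

lemma cw8 (j : Fin q) (K : Fin (q + 2)) :
    cwTensor q (Fin.last (q + 1)) (mid q j) K = 0 := by
  simp [cwTensor, (zero_ne_last q).symm, mid_ne_zero q j, mid_ne_last q j]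

lemma cw9 (K : Fin (q + 2)) :
    cwTensor q (Fin.last (q + 1)) (Fin.last (q + 1)) K = 0 := by
  simp [cwTensor, (zero_ne_last q).symm]

end
end CW

open CW in
/-- Let `A = ℂ[x₁,…,x_q]/(xᵢxⱼ, xᵢ²−xⱼ², xᵢ³ : i ≠ j)`.  Then `A` has
dimension `q+2`, with basis `{1, x₁, …, x_q, [x₁²]}` (so in particular all
classes `[xᵢ²]` coincide), and its structure tensor, after relabeling the
third-factor basis by the swap `1 ↔ [x₁²]` (indices `0 ↔ q+1`), equals the big
Coppersmith–Winograd tensor `T_{CW,q}`. -/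
theorem structure_tensor_cwAlgebra_eq_cwTensor (q : ℕ) (hq : 0 < q) :
    ∃ b : Module.Basis (Fin (q + 2)) ℂ (MvPolynomial (Fin q) ℂ ⧸ cwIdeal q),
      b 0 = 1 ∧
      (∀ i : Fin q, b i.succ.castSucc = Ideal.Quotient.mk (cwIdeal q) (X i)) ∧
      (∀ i : Fin q, b (Fin.last (q + 1)) = Ideal.Quotient.mk (cwIdeal q) (X i ^ 2)) ∧
      ∀ I J K : Fin (q + 2),
        b.repr (b I * b J) (Equiv.swap 0 (Fin.last (q + 1)) K) = cwTensor q I J K := by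
  refine ⟨Module.Basis.mk (li_vB hq) (span_vB hq), ?_, ?_, ?_, ?_⟩ <;>
    [skip; skip; skip; skip]
  case _ => rw [Module.Basis.mk_apply, vB_zero]
  case _ => intro i; rw [Module.Basis.mk_apply]; exact vB_mid hq i
  case _ => intro i; rw [Module.Basis.mk_apply, vB_last hq]; exact q_sq _ i
  case _ =>
    set b := Module.Basis.mk (li_vB hq) (span_vB hq) with hbdef
    set σ : Equiv.Perm (Fin (q + 2)) := Equiv.swap 0 (Fin.last (q + 1)) with hσdef
    have hb0 : b 0 = 1 := by rw [hbdef, Module.Basis.mk_apply, vB_zero]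
    have hbm : ∀ i : Fin q, b (mid q i) = Ideal.Quotient.mk (cwIdeal q) (X i) := by
      intro i; rw [hbdef, Module.Basis.mk_apply, vB_mid]
    have hbl : b (Fin.last (q + 1)) = Ideal.Quotient.mk (cwIdeal q) (X (⟨0, hq⟩ : Fin q) ^ 2) := by
      rw [hbdef, Module.Basis.mk_apply, vB_last]
    have hσ0 : σ 0 = Fin.last (q + 1) := Equiv.swap_apply_left _ _
    have hσl : σ (Fin.last (q + 1)) = 0 := Equiv.swap_apply_right _ _
    have hσm : ∀ i : Fin q, σ (mid q i) = mid q i := fun i =>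
      Equiv.swap_apply_of_ne_of_ne (mid_ne_zero q i) (mid_ne_last q i)
    have hiff : ∀ M K : Fin (q + 2), (M = σ K) ↔ (K = σ M) := by
      intro M K
      constructor
      · rintro rfl; rw [hσdef, Equiv.swap_apply_self]
      · rintro rfl; rw [hσdef, Equiv.swap_apply_self]
    have hrepr : ∀ M K : Fin (q + 2),
        b.repr (b M) (σ K) = if K = σ M then 1 else 0 := by
      intro M K
      rw [Module.Basis.repr_self, Finsupp.single_apply]
      simp only [hiff]
    have hzero : ∀ K : Fin (q + 2), b.repr 0 (σ K) = 0 := by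
      intro K; rw [LinearEquiv.map_zero]; rfl
    intro I J K
    rcases cases3 q I with rfl | ⟨i, rfl⟩ | rfl <;>
      rcases cases3 q J with rfl | ⟨j, rfl⟩ | rfl
    · rw [show b 0 * b 0 = b 0 by rw [hb0, one_mul], hrepr, hσ0, cw1]
    · rw [show b 0 * b (mid q j) = b (mid q j) by rw [hb0, one_mul], hrepr, hσm, cw2]
    · rw [show b 0 * b (Fin.last (q + 1)) = b (Fin.last (q + 1)) by rw [hb0, one_mul],
        hrepr, hσl, cw3]
    · rw [show b (mid q i) * b 0 = b (mid q i) by rw [hb0, mul_one], hrepr, hσm, cw4]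
    · rcases eq_or_ne i j with rfl | h
      · rw [show b (mid q i) * b (mid q i) = b (Fin.last (q + 1)) by
            rw [hbm, hbl, q_x_mul_x]; exact q_sq i _,
          hrepr, hσl, cw5]
        simp
      · rw [show b (mid q i) * b (mid q j) = 0 by rw [hbm, hbm]; exact q_mul_ne h,
          hzero, cw5]
        simp [Ne.symm h]
    · rw [show b (mid q i) * b (Fin.last (q + 1)) = 0 by rw [hbm, hbl]; exact q_x_mul_sq i _,
        hzero, cw6]
    · rw [show b (Fin.last (q + 1)) * b 0 = b (Fin.last (q + 1)) by rw [hb0, mul_one],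
        hrepr, hσl, cw7]
    · rw [show b (Fin.last (q + 1)) * b (mid q j) = 0 by
          rw [hbm, hbl, mul_comm]; exact q_x_mul_sq j _,
        hzero, cw8]
    · rw [show b (Fin.last (q + 1)) * b (Fin.last (q + 1)) = 0 by
          rw [hbl]; exact q_sq_mul_sq _ _,
        hzero, cw9]
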